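/- Let Ξ be the unique nonnegative solution, started at 0, of Ξ(t) = ∫₀^t √(1 − e^{−Ξ(s)}) dβ(s) + (1/2) ∫₀^t e^{−Ξ(s)} ds, with β a standard Brownian motion. Then for all t > 100, ℙ(sup_{0 ≤ s ≤ t} Ξ(s) < 1) ≤ 2 exp(−t/50). -/

import Mathlib

open MeasureTheory ProbabilityTheory Filter Set

noncomputable section

namespace ModDev

variable {Ω : Type*}

/-- `B` is a standard one-dimensional Brownian motion started at `0`
(only times `t ≥ 0` are relevant): continuous paths, `B 0 = 0`, Gaussian
increments and independent increments. -/
def IsBrownianMotion [MeasurableSpace Ω] (μ : Measure Ω) (B : Ω → ℝ → ℝ) : Prop :=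
  (∀ t : ℝ, Measurable fun ω => B ω t) ∧
  (∀ᵐ ω ∂μ, Continuous (B ω) ∧ B ω 0 = 0) ∧
  (∀ s t : ℝ, 0 ≤ s → s ≤ t →
    μ.map (fun ω => B ω t - B ω s) = gaussianReal 0 (Real.toNNReal (t - s))) ∧
  (∀ n : ℕ, ∀ u : ℕ → ℝ, (∀ i, 0 ≤ u i) → Monotone u →
    iIndepFun
      (fun i : Fin n => fun ω => B ω (u (i + 1)) - B ω (u i)) μ)

/-- `W` is a two-sided standard Brownian motion indexed by `ℝ`, with `W 0 = 0`. -/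
def IsTwoSidedBM [MeasurableSpace Ω] (μ : Measure Ω) (W : Ω → ℝ → ℝ) : Prop :=
  (∀ t : ℝ, Measurable fun ω => W ω t) ∧
  (∀ᵐ ω ∂μ, Continuous (W ω) ∧ W ω 0 = 0) ∧
  (∀ s t : ℝ, s ≤ t →
    μ.map (fun ω => W ω t - W ω s) = gaussianReal 0 (Real.toNNReal (t - s))) ∧
  (∀ n : ℕ, ∀ u : ℕ → ℝ, Monotone u →
    iIndepFun
      (fun i : Fin n => fun ω => W ω (u (i + 1)) - W ω (u i)) μ)

/-- `L` is the (jointly continuous, nonnegative) family of local times of `B`,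
characterized by the occupation density formula
`∫₀ᵗ f (B s) ds = ∫ f x · L t x dx` for nonnegative Borel `f`. -/
def IsLocalTime [MeasurableSpace Ω] (μ : Measure Ω) (B : Ω → ℝ → ℝ)
    (L : Ω → ℝ → ℝ → ℝ) : Prop :=
  (∀ t x : ℝ, Measurable fun ω => L ω t x) ∧
  (∀ᵐ ω ∂μ, Continuous (Function.uncurry (L ω)) ∧ (∀ t x, 0 ≤ L ω t x) ∧
    ∀ t : ℝ, 0 ≤ t → ∀ f : ℝ → ENNReal, Measurable f →
      (∫⁻ s in Set.Ioc (0:ℝ) t, f (B ω s)) = ∫⁻ x, f x * ENNReal.ofReal (L ω t x))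

/-- first hitting time of the level `y` by the path `Y` -/
def hitTime (Y : ℝ → ℝ) (y : ℝ) : ℝ := sInf {t : ℝ | 0 ≤ t ∧ Y t = y}

/-- `σ(y) = inf {t > 0 : Y t > y}` -/
def hitAbove (Y : ℝ → ℝ) (y : ℝ) : ℝ := sInf {t : ℝ | 0 < t ∧ y < Y t}

/-- inverse local time at level `0`: `τ(r) = inf {t > 0 : L(t,0) > r}` -/
def invLocalTime (L : ℝ → ℝ → ℝ) (r : ℝ) : ℝ := sInf {t : ℝ | 0 < t ∧ r < L t 0}

/-- `Z` solves the martingale problem for the generator `(a/2) f'' + b f'`,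
for test functions supported in `s`. -/
def SolvesMPOn [m : MeasurableSpace Ω] (μ : Measure Ω) (a b : ℝ → ℝ) (s : Set ℝ)
    (Z : Ω → ℝ → ℝ) : Prop :=
  (∀ t : ℝ, Measurable fun ω => Z ω t) ∧
  (∀ᵐ ω ∂μ, Continuous (Z ω)) ∧
  ∃ ℱ : Filtration NNReal m,
    Adapted ℱ (fun (t : NNReal) ω => Z ω (t : ℝ)) ∧
    ∀ f : ℝ → ℝ, ContDiff ℝ 2 f → HasCompactSupport f → tsupport f ⊆ s →
      Martingale (fun (t : NNReal) ω => f (Z ω (t : ℝ)) -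
        ∫ u in (0:ℝ)..(t : ℝ),
          (a (Z ω u) / 2 * deriv (deriv f) (Z ω u) + b (Z ω u) * deriv f (Z ω u))) ℱ μ

/-- martingale problem with arbitrary compactly supported `C²` test functions -/
def SolvesMP [MeasurableSpace Ω] (μ : Measure Ω) (a b : ℝ → ℝ) (Z : Ω → ℝ → ℝ) : Prop :=
  SolvesMPOn μ a b Set.univ Z

/-- Bessel process of dimension `δ` started at `x₀ ≥ 0` (absorbed at `0`):
nonnegative continuous solution of the martingale problem for
`(1/2) f'' + ((δ-1)/(2x)) f'` for test functions supported in `(0,∞)`. -/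
def IsBesselProcess [MeasurableSpace Ω] (μ : Measure Ω) (δ x₀ : ℝ)
    (R : Ω → ℝ → ℝ) : Prop :=
  SolvesMPOn μ (fun _ => 1) (fun z => (δ - 1) / (2 * z)) (Set.Ioi 0) R ∧
  ∀ᵐ ω ∂μ, R ω 0 = x₀ ∧ (∀ t, 0 ≤ R ω t) ∧
    ∀ t s : ℝ, 0 ≤ t → t ≤ s → R ω t = 0 → R ω s = 0

/-- squared Bessel process of dimension `δ` started at `x₀`: nonnegative continuous
solution of the martingale problem for the generator `2x f'' + δ f'`. -/
def IsBESQ [MeasurableSpace Ω] (μ : Measure Ω) (δ x₀ : ℝ) (U : Ω → ℝ → ℝ) : Prop :=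
  SolvesMP μ (fun z => 4 * z) (fun _ => δ) U ∧
  ∀ᵐ ω ∂μ, U ω 0 = x₀ ∧ ∀ t, 0 ≤ U ω t

/-- `X` is the diffusion with potential `V` started from `x₀`, conditionally on the
environment `V` a diffusion with generator `(1/2) e^{V(x)} (d/dx)(e^{-V(x)} d/dx)`;
it is realized through the classical (Brox) time-change representation
`X(t) = A⁻¹(B(T⁻¹(t)))`, where `A(y) = ∫_{x₀}^y e^{V(z)} dz`,
`T(u) = ∫₀^u e^{-2V(A⁻¹(B(s)))} ds` and `B` is a Brownian motion independent of `V`. -/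
def IsDiffusionWithPotentialFrom [MeasurableSpace Ω] (μ : Measure Ω)
    (V : Ω → ℝ → ℝ) (x₀ : ℝ) (X : Ω → ℝ → ℝ) : Prop :=
  (∀ t : ℝ, Measurable fun ω => X ω t) ∧
  ∃ B Ainv Tinv : Ω → ℝ → ℝ,
    IsBrownianMotion μ B ∧
    IndepFun (fun ω => V ω) (fun ω => B ω) μ ∧
    ∀ᵐ ω ∂μ,
      (∀ y : ℝ, Ainv ω (∫ z in x₀..y, Real.exp (V ω z)) = y) ∧
      (∀ t : ℝ, 0 ≤ t → 0 ≤ Tinv ω t ∧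
        (∫ s in (0:ℝ)..(Tinv ω t), Real.exp (-2 * V ω (Ainv ω (B ω s)))) = t) ∧
      (∀ t : ℝ, 0 ≤ t → X ω t = Ainv ω (B ω (Tinv ω t)))

/-- the diffusion with potential `V` started from `0` -/
def IsDiffusionWithPotential [MeasurableSpace Ω] (μ : Measure Ω)
    (V : Ω → ℝ → ℝ) (X : Ω → ℝ → ℝ) : Prop :=
  IsDiffusionWithPotentialFrom μ V 0 X

/-- the σ-algebra generated by the environment (potential) `V`; conditioning on it
gives the quenched probability -/
def envSigma [MeasurableSpace Ω] (V : Ω → ℝ → ℝ) : MeasurableSpace Ω :=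
  MeasurableSpace.comap (fun ω => V ω) inferInstance

/-- `W^#(a,b) = sup_{0 ≤ s ≤ t ≤ 1} (W(a + t(b-a)) - W(a + s(b-a)))` -/
def Wsharp (w : ℝ → ℝ) (a b : ℝ) : ℝ :=
  sSup ((fun p : ℝ × ℝ => w (a + p.2 * (b - a)) - w (a + p.1 * (b - a))) ''
    {p : ℝ × ℝ | 0 ≤ p.1 ∧ p.1 ≤ p.2 ∧ p.2 ≤ 1})

/-- modified Bessel function of the second kind (Macdonald function) of index `ν` -/
def besselK (ν x : ℝ) : ℝ :=
  ∫ t in Set.Ioi (0:ℝ), Real.exp (-x * Real.cosh t) * Real.cosh (ν * t)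

/-- modified Bessel function of the first kind of index `1` -/
def besselI1 (x : ℝ) : ℝ :=
  ∑' n : ℕ, (x / 2) ^ (2 * n + 1) / ((n.factorial : ℝ) * ((n + 1).factorial : ℝ))

end ModDev

namespace XiAux


/-- positive part -/
def pp (x : ℝ) : ℝ := max x 0

lemma pp_nonneg (x : ℝ) : 0 ≤ pp x := le_max_right _ _

lemma pp_zero : pp 0 = 0 := max_self 0

lemma pp_abs_le (x : ℝ) : |pp x| ≤ |x| := by
  rw [abs_of_nonneg (pp_nonneg x)]
  rcases le_or_gt x 0 with h | h
  · simp [pp, max_eq_right h]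
  · simp [pp, max_eq_left h.le, le_abs_self]

lemma continuous_pp : Continuous pp := continuous_id.max continuous_const

lemma pp_of_nonneg {x : ℝ} (h : 0 ≤ x) : pp x = x := max_eq_left h
lemma pp_of_nonpos {x : ℝ} (h : x ≤ 0) : pp x = 0 := max_eq_right h

lemma hasDerivAt_pp_pow {n : ℕ} (hn : 2 ≤ n) (x : ℝ) :
    HasDerivAt (fun y => pp y ^ n) (n * pp x ^ (n - 1)) x := by
  rcases lt_trichotomy x 0 with h | h | h
  · have he : (fun y : ℝ => pp y ^ n) =ᶠ[nhds x] fun _ => (0:ℝ) := by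
      filter_upwards [Iio_mem_nhds h] with y hy
      rw [pp_of_nonpos (le_of_lt (mem_Iio.1 hy))]
      exact zero_pow (by omega)
    have h0 : HasDerivAt (fun _ : ℝ => (0:ℝ)) 0 x := hasDerivAt_const x 0
    have := h0.congr_of_eventuallyEq he
    have hz : (n:ℝ) * pp x ^ (n-1) = 0 := by
      rw [pp_of_nonpos h.le, zero_pow (by omega)]; ring
    rwa [hz]
  · subst h
    rw [hasDerivAt_iff_tendsto_slope]
    have hz : (n:ℝ) * pp 0 ^ (n-1) = 0 := by
      rw [pp_zero, zero_pow (by omega)]; ring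
    rw [hz]
    apply squeeze_zero_norm' (a := fun y : ℝ => |y| ^ (n-1))
    · filter_upwards [self_mem_nhdsWithin] with y hy
      have hy0 : y ≠ 0 := hy
      rw [slope_def_field]
      have h1 : |pp y ^ n| ≤ |y| ^ n := by
        rw [abs_pow]
        exact pow_le_pow_left₀ (abs_nonneg _) (pp_abs_le y) n
      calc ‖(pp y ^ n - pp 0 ^ n) / (y - 0)‖
          = |pp y ^ n| / |y| := by
            rw [pp_zero, zero_pow (by omega), sub_zero, sub_zero, Real.norm_eq_abs, abs_div]
        _ ≤ |y| ^ n / |y| := by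
            apply div_le_div_of_nonneg_right h1 ?_ |>.trans_eq rfl
            · exact abs_nonneg _
        _ = |y| ^ (n - 1) := by
            rw [eq_comm, eq_div_iff (abs_ne_zero.2 hy0), ← pow_succ]
            congr 1; omega
    · have : Filter.Tendsto (fun y : ℝ => |y| ^ (n-1)) (nhds 0) (nhds 0) := by
        have h1 : Filter.Tendsto (fun y : ℝ => |y|) (nhds 0) (nhds 0) := by
          simpa using continuous_abs.tendsto (0:ℝ)
        have := h1.pow (n-1)
        simpa [zero_pow (show n - 1 ≠ 0 by omega)] using this
      exact this.mono_left nhdsWithin_le_nhds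
  · have he : (fun y : ℝ => pp y ^ n) =ᶠ[nhds x] fun y => y ^ n := by
      filter_upwards [Ioi_mem_nhds h] with y hy
      rw [pp_of_nonneg (le_of_lt (mem_Ioi.1 hy))]
    have h0 : HasDerivAt (fun y : ℝ => y ^ n) ((n:ℝ) * x ^ (n - 1)) x := hasDerivAt_pow n x
    have := h0.congr_of_eventuallyEq he
    rwa [pp_of_nonneg h.le]





/-- the test function: a C² compactly supported cubic spline -/
def tf (z : ℝ) : ℝ :=
  (2161/3072) * pp (z+4) ^ 3 - (2161/1536) * pp (z+3) ^ 3 - (1/4) * pp (z+2) ^ 3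
  + (891/512) * pp (z+1) ^ 3 - (891/1024) * pp z ^ 3 + (5/4) * pp (z-1) ^ 3
  - (7/6) * pp (z - 3/2) ^ 3 - (1/3) * pp (z - 41/16) ^ 3 + (1/3) * pp (z - 57/16) ^ 3

def tf1 (z : ℝ) : ℝ :=
  3 * ((2161/3072) * pp (z+4) ^ 2 - (2161/1536) * pp (z+3) ^ 2 - (1/4) * pp (z+2) ^ 2
  + (891/512) * pp (z+1) ^ 2 - (891/1024) * pp z ^ 2 + (5/4) * pp (z-1) ^ 2
  - (7/6) * pp (z - 3/2) ^ 2 - (1/3) * pp (z - 41/16) ^ 2 + (1/3) * pp (z - 57/16) ^ 2)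

def tf2 (z : ℝ) : ℝ :=
  6 * ((2161/3072) * pp (z+4) - (2161/1536) * pp (z+3) - (1/4) * pp (z+2)
  + (891/512) * pp (z+1) - (891/1024) * pp z + (5/4) * pp (z-1)
  - (7/6) * pp (z - 3/2) - (1/3) * pp (z - 41/16) + (1/3) * pp (z - 57/16))

lemma hasDerivAt_shift (t x : ℝ) {n : ℕ} (hn : 2 ≤ n) :
    HasDerivAt (fun z => pp (z - t) ^ n) (n * pp (x - t) ^ (n-1)) x := by
  have h1 : HasDerivAt (fun z : ℝ => z - t) 1 x := (hasDerivAt_id x).sub_const t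
  have := (hasDerivAt_pp_pow hn (x - t)).comp x h1
  simp only [mul_one] at this
  exact this

lemma tf_hasDerivAt (x : ℝ) : HasDerivAt tf (tf1 x) x := by
  unfold tf tf1
  have H : ∀ t : ℝ, HasDerivAt (fun z => pp (z - t) ^ 3) (3 * pp (x - t) ^ 2) x := by
    intro t; convert hasDerivAt_shift t x (n := 3) (by norm_num) using 1; norm_num
  have H' : ∀ t : ℝ, HasDerivAt (fun z => pp (z + t) ^ 3) (3 * pp (x + t) ^ 2) x := by
    intro t; simpa [sub_neg_eq_add] using H (-t)
  have hx : HasDerivAt (fun z : ℝ => pp z ^ 3) (3 * pp x ^ 2) x := by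
    simpa using hasDerivAt_pp_pow (n := 3) (by norm_num) x
  have := ((((((((((H' 4).const_mul ((2161:ℝ)/3072)).sub ((H' 3).const_mul ((2161:ℝ)/1536))).sub
      ((H' 2).const_mul ((1:ℝ)/4))).add ((H' 1).const_mul ((891:ℝ)/512))).sub
      (hx.const_mul ((891:ℝ)/1024))).add ((H 1).const_mul ((5:ℝ)/4))).sub
      ((H (3/2)).const_mul ((7:ℝ)/6))).sub ((H (41/16)).const_mul ((1:ℝ)/3))).add
      ((H (57/16)).const_mul ((1:ℝ)/3)))
  exact this.congr_deriv (by ring)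

lemma tf1_hasDerivAt (x : ℝ) : HasDerivAt tf1 (tf2 x) x := by
  unfold tf1 tf2
  have H : ∀ t : ℝ, HasDerivAt (fun z => pp (z - t) ^ 2) (2 * pp (x - t)) x := by
    intro t; simpa using hasDerivAt_shift t x (le_refl 2)
  have H' : ∀ t : ℝ, HasDerivAt (fun z => pp (z + t) ^ 2) (2 * pp (x + t)) x := by
    intro t; simpa [sub_neg_eq_add] using H (-t)
  have hx : HasDerivAt (fun z : ℝ => pp z ^ 2) (2 * pp x) x := by
    simpa using hasDerivAt_pp_pow (n := 2) (le_refl 2) x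
  have := (((((((((((H' 4).const_mul ((2161:ℝ)/3072)).sub ((H' 3).const_mul ((2161:ℝ)/1536))).sub
      ((H' 2).const_mul ((1:ℝ)/4))).add ((H' 1).const_mul ((891:ℝ)/512))).sub
      (hx.const_mul ((891:ℝ)/1024))).add ((H 1).const_mul ((5:ℝ)/4))).sub
      ((H (3/2)).const_mul ((7:ℝ)/6))).sub ((H (41/16)).const_mul ((1:ℝ)/3))).add
      ((H (57/16)).const_mul ((1:ℝ)/3))).const_mul (3:ℝ))
  exact this.congr_deriv (by ring)

lemma continuous_tf1 : Continuous tf1 := by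
  have h : Differentiable ℝ tf1 := fun x => (tf1_hasDerivAt x).differentiableAt
  exact h.continuous

lemma deriv_tf : deriv tf = tf1 := funext fun x => (tf_hasDerivAt x).deriv
lemma deriv_tf1 : deriv tf1 = tf2 := funext fun x => (tf1_hasDerivAt x).deriv

lemma continuous_tf2 : Continuous tf2 := by
  unfold tf2
  have H : ∀ t : ℝ, Continuous fun z : ℝ => pp (z - t) :=
    fun t => continuous_pp.comp (continuous_id.sub continuous_const)
  have H' : ∀ t : ℝ, Continuous fun z : ℝ => pp (z + t) :=
    fun t => continuous_pp.comp (continuous_id.add continuous_const)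
  have hx : Continuous fun z : ℝ => pp z := continuous_pp
  exact continuous_const.mul
    (((((((((continuous_const.mul (H' 4)).sub (continuous_const.mul (H' 3))).sub
      (continuous_const.mul (H' 2))).add (continuous_const.mul (H' 1))).sub
      (continuous_const.mul hx)).add (continuous_const.mul (H 1))).sub
      (continuous_const.mul (H (3/2)))).sub (continuous_const.mul (H (41/16)))).add
      (continuous_const.mul (H (57/16))))

lemma contDiff_tf : ContDiff ℝ 2 tf := by
  rw [show (2 : WithTop ℕ∞) = 1 + 1 from by norm_num, contDiff_succ_iff_deriv]
  refine ⟨fun x => (tf_hasDerivAt x).differentiableAt, by simp, ?_⟩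
  rw [deriv_tf, contDiff_one_iff_deriv, deriv_tf1]
  exact ⟨fun x => (tf1_hasDerivAt x).differentiableAt, continuous_tf2⟩











lemma tf_eq_zero_of_ge {z : ℝ} (h : 57/16 ≤ z) : tf z = 0 := by
  unfold tf
  rw [pp_of_nonneg (by linarith : (0:ℝ) ≤ z + 4), pp_of_nonneg (by linarith : (0:ℝ) ≤ z + 3),
    pp_of_nonneg (by linarith : (0:ℝ) ≤ z + 2), pp_of_nonneg (by linarith : (0:ℝ) ≤ z + 1),
    pp_of_nonneg (by linarith : (0:ℝ) ≤ z), pp_of_nonneg (by linarith : (0:ℝ) ≤ z - 1),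
    pp_of_nonneg (by linarith : (0:ℝ) ≤ z - 3/2), pp_of_nonneg (by linarith : (0:ℝ) ≤ z - 41/16),
    pp_of_nonneg (by linarith : (0:ℝ) ≤ z - 57/16)]
  ring

lemma tf_eq_zero_of_le {z : ℝ} (h : z ≤ -4) : tf z = 0 := by
  unfold tf
  rw [pp_of_nonpos (by linarith : z + 4 ≤ 0), pp_of_nonpos (by linarith : z + 3 ≤ 0),
    pp_of_nonpos (by linarith : z + 2 ≤ 0), pp_of_nonpos (by linarith : z + 1 ≤ 0),
    pp_of_nonpos (by linarith : z ≤ 0), pp_of_nonpos (by linarith : z - 1 ≤ 0),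
    pp_of_nonpos (by linarith : z - 3/2 ≤ 0), pp_of_nonpos (by linarith : z - 41/16 ≤ 0),
    pp_of_nonpos (by linarith : z - 57/16 ≤ 0)]
  ring

lemma hcs_tf : HasCompactSupport tf := by
  apply HasCompactSupport.intro (isCompact_Icc (a := (-4:ℝ)) (b := 57/16))
  intro x hx
  rcases not_and_or.1 hx with h | h
  · exact tf_eq_zero_of_le (by linarith [lt_of_not_ge h])
  · exact tf_eq_zero_of_ge (by linarith [lt_of_not_ge h])

lemma tf1_eval01 {z : ℝ} (h0 : 0 ≤ z) (h1 : z ≤ 1) : tf1 z = -2 - z - z^2/4 := by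
  unfold tf1
  rw [pp_of_nonneg (by linarith : (0:ℝ) ≤ z + 4), pp_of_nonneg (by linarith : (0:ℝ) ≤ z + 3),
    pp_of_nonneg (by linarith : (0:ℝ) ≤ z + 2), pp_of_nonneg (by linarith : (0:ℝ) ≤ z + 1),
    pp_of_nonneg h0, pp_of_nonpos (by linarith : z - 1 ≤ 0),
    pp_of_nonpos (by linarith : z - 3/2 ≤ 0), pp_of_nonpos (by linarith : z - 41/16 ≤ 0),
    pp_of_nonpos (by linarith : z - 57/16 ≤ 0)]
  ring

lemma tf2_eval01 {z : ℝ} (h0 : 0 ≤ z) (h1 : z ≤ 1) : tf2 z = -1 - z/2 := by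
  unfold tf2
  rw [pp_of_nonneg (by linarith : (0:ℝ) ≤ z + 4), pp_of_nonneg (by linarith : (0:ℝ) ≤ z + 3),
    pp_of_nonneg (by linarith : (0:ℝ) ≤ z + 2), pp_of_nonneg (by linarith : (0:ℝ) ≤ z + 1),
    pp_of_nonneg h0, pp_of_nonpos (by linarith : z - 1 ≤ 0),
    pp_of_nonpos (by linarith : z - 3/2 ≤ 0), pp_of_nonpos (by linarith : z - 41/16 ≤ 0),
    pp_of_nonpos (by linarith : z - 57/16 ≤ 0)]
  ring

lemma tf_at_one : tf 1 = 1073/256 := by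
  unfold tf
  norm_num [pp_of_nonneg, pp_of_nonpos]

lemma tf_at_zero : tf 0 = 5203/768 := by
  unfold tf
  norm_num [pp_of_nonneg, pp_of_nonpos]

lemma tf_at_end : tf (57/16) = 0 := tf_eq_zero_of_ge (le_refl _)

lemma tf1_nonpos {z : ℝ} (h : 0 ≤ z) : tf1 z ≤ 0 := by
  rcases le_or_gt z 1 with h1 | h1
  · rw [tf1_eval01 h h1]; nlinarith [sq_nonneg z]
  rcases le_or_gt z (3/2) with h2 | h2
  · unfold tf1
    rw [pp_of_nonneg (by linarith : (0:ℝ) ≤ z + 4), pp_of_nonneg (by linarith : (0:ℝ) ≤ z + 3),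
      pp_of_nonneg (by linarith : (0:ℝ) ≤ z + 2), pp_of_nonneg (by linarith : (0:ℝ) ≤ z + 1),
      pp_of_nonneg h, pp_of_nonneg (by linarith : (0:ℝ) ≤ z - 1),
      pp_of_nonpos (by linarith : z - 3/2 ≤ 0), pp_of_nonpos (by linarith : z - 41/16 ≤ 0),
      pp_of_nonpos (by linarith : z - 57/16 ≤ 0)]
    nlinarith [sq_nonneg (z-1), sq_nonneg z]
  rcases le_or_gt z (41/16) with h3 | h3
  · unfold tf1
    rw [pp_of_nonneg (by linarith : (0:ℝ) ≤ z + 4), pp_of_nonneg (by linarith : (0:ℝ) ≤ z + 3),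
      pp_of_nonneg (by linarith : (0:ℝ) ≤ z + 2), pp_of_nonneg (by linarith : (0:ℝ) ≤ z + 1),
      pp_of_nonneg h, pp_of_nonneg (by linarith : (0:ℝ) ≤ z - 1),
      pp_of_nonneg (by linarith : (0:ℝ) ≤ z - 3/2), pp_of_nonpos (by linarith : z - 41/16 ≤ 0),
      pp_of_nonpos (by linarith : z - 57/16 ≤ 0)]
    nlinarith [sq_nonneg (z - 3/2)]
  rcases le_or_gt z (57/16) with h4 | h4
  · unfold tf1
    rw [pp_of_nonneg (by linarith : (0:ℝ) ≤ z + 4), pp_of_nonneg (by linarith : (0:ℝ) ≤ z + 3),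
      pp_of_nonneg (by linarith : (0:ℝ) ≤ z + 2), pp_of_nonneg (by linarith : (0:ℝ) ≤ z + 1),
      pp_of_nonneg h, pp_of_nonneg (by linarith : (0:ℝ) ≤ z - 1),
      pp_of_nonneg (by linarith : (0:ℝ) ≤ z - 3/2), pp_of_nonneg (by linarith : (0:ℝ) ≤ z - 41/16),
      pp_of_nonpos (by linarith : z - 57/16 ≤ 0)]
    nlinarith [sq_nonneg (z - 57/16)]
  · unfold tf1
    rw [pp_of_nonneg (by linarith : (0:ℝ) ≤ z + 4), pp_of_nonneg (by linarith : (0:ℝ) ≤ z + 3),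
      pp_of_nonneg (by linarith : (0:ℝ) ≤ z + 2), pp_of_nonneg (by linarith : (0:ℝ) ≤ z + 1),
      pp_of_nonneg h, pp_of_nonneg (by linarith : (0:ℝ) ≤ z - 1),
      pp_of_nonneg (by linarith : (0:ℝ) ≤ z - 3/2), pp_of_nonneg (by linarith : (0:ℝ) ≤ z - 41/16),
      pp_of_nonneg (by linarith : (0:ℝ) ≤ z - 57/16)]
    nlinarith [sq_nonneg z]

lemma tf2_le_two {z : ℝ} (h : 0 ≤ z) : tf2 z ≤ 2 := by
  rcases le_or_gt z 1 with h1 | h1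
  · rw [tf2_eval01 h h1]; linarith
  rcases le_or_gt z (3/2) with h2 | h2
  · unfold tf2
    rw [pp_of_nonneg (by linarith : (0:ℝ) ≤ z + 4), pp_of_nonneg (by linarith : (0:ℝ) ≤ z + 3),
      pp_of_nonneg (by linarith : (0:ℝ) ≤ z + 2), pp_of_nonneg (by linarith : (0:ℝ) ≤ z + 1),
      pp_of_nonneg h, pp_of_nonneg (by linarith : (0:ℝ) ≤ z - 1),
      pp_of_nonpos (by linarith : z - 3/2 ≤ 0), pp_of_nonpos (by linarith : z - 41/16 ≤ 0),
      pp_of_nonpos (by linarith : z - 57/16 ≤ 0)]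
    linarith
  rcases le_or_gt z (41/16) with h3 | h3
  · unfold tf2
    rw [pp_of_nonneg (by linarith : (0:ℝ) ≤ z + 4), pp_of_nonneg (by linarith : (0:ℝ) ≤ z + 3),
      pp_of_nonneg (by linarith : (0:ℝ) ≤ z + 2), pp_of_nonneg (by linarith : (0:ℝ) ≤ z + 1),
      pp_of_nonneg h, pp_of_nonneg (by linarith : (0:ℝ) ≤ z - 1),
      pp_of_nonneg (by linarith : (0:ℝ) ≤ z - 3/2), pp_of_nonpos (by linarith : z - 41/16 ≤ 0),
      pp_of_nonpos (by linarith : z - 57/16 ≤ 0)]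
    linarith
  rcases le_or_gt z (57/16) with h4 | h4
  · unfold tf2
    rw [pp_of_nonneg (by linarith : (0:ℝ) ≤ z + 4), pp_of_nonneg (by linarith : (0:ℝ) ≤ z + 3),
      pp_of_nonneg (by linarith : (0:ℝ) ≤ z + 2), pp_of_nonneg (by linarith : (0:ℝ) ≤ z + 1),
      pp_of_nonneg h, pp_of_nonneg (by linarith : (0:ℝ) ≤ z - 1),
      pp_of_nonneg (by linarith : (0:ℝ) ≤ z - 3/2), pp_of_nonneg (by linarith : (0:ℝ) ≤ z - 41/16),
      pp_of_nonpos (by linarith : z - 57/16 ≤ 0)]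
    linarith
  · unfold tf2
    rw [pp_of_nonneg (by linarith : (0:ℝ) ≤ z + 4), pp_of_nonneg (by linarith : (0:ℝ) ≤ z + 3),
      pp_of_nonneg (by linarith : (0:ℝ) ≤ z + 2), pp_of_nonneg (by linarith : (0:ℝ) ≤ z + 1),
      pp_of_nonneg h, pp_of_nonneg (by linarith : (0:ℝ) ≤ z - 1),
      pp_of_nonneg (by linarith : (0:ℝ) ≤ z - 3/2), pp_of_nonneg (by linarith : (0:ℝ) ≤ z - 41/16),
      pp_of_nonneg (by linarith : (0:ℝ) ≤ z - 57/16)]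
    linarith




lemma tf_antitoneOn : AntitoneOn tf (Ici 0) := by
  apply antitoneOn_of_deriv_nonpos (convex_Ici 0) (contDiff_tf.continuous.continuousOn)
  · intro x hx
    exact ((tf_hasDerivAt x).differentiableAt).differentiableWithinAt
  · intro x hx
    rw [deriv_tf]
    rw [interior_Ici, mem_Ioi] at hx
    exact tf1_nonpos hx.le

lemma tf_ge_one {z : ℝ} (h0 : 0 ≤ z) (h1 : z ≤ 1) : 1 ≤ tf z := by
  have := tf_antitoneOn (mem_Ici.2 h0) (mem_Ici.2 (by linarith : (0:ℝ) ≤ 1)) h1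
  rw [tf_at_one] at this
  linarith

lemma tf_nonneg {z : ℝ} (h : 0 ≤ z) : 0 ≤ tf z := by
  rcases le_or_gt z (57/16) with h1 | h1
  · have := tf_antitoneOn (mem_Ici.2 h) (mem_Ici.2 (by norm_num : (0:ℝ) ≤ 57/16)) h1
    rw [tf_at_end] at this
    linarith
  · rw [tf_eq_zero_of_ge h1.le]

lemma tf_le_max {z : ℝ} (h : 0 ≤ z) : tf z ≤ 5203/768 := by
  have := tf_antitoneOn (mem_Ici.2 (le_refl 0)) (mem_Ici.2 h) h
  rw [tf_at_zero] at this
  linarith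

lemma exp_le_cubic {z : ℝ} (h0 : 0 ≤ z) (h1 : z ≤ 1) :
    Real.exp z ≤ 1 + z + z^2/2 + z^3/2 := by
  have := Real.exp_bound' h0 h1 (n := 3) (by norm_num)
  simp only [Finset.sum_range_succ, Finset.sum_range_zero] at this
  norm_num [Nat.factorial] at this
  nlinarith [pow_nonneg h0 3, this]

lemma exp_third_lt : Real.exp (3/10) ≤ 1351/1000 := by
  have := Real.exp_bound' (by norm_num : (0:ℝ) ≤ 3/10) (by norm_num) (n := 3) (by norm_num)
  simp only [Finset.sum_range_succ, Finset.sum_range_zero] at this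
  norm_num [Nat.factorial] at this
  linarith

lemma rho_le : (15187 : ℝ)/20736 ≤ Real.exp (-(3/10)) := by
  rw [Real.exp_neg]
  rw [le_inv_comm₀ (by norm_num) (Real.exp_pos _)]
  calc Real.exp (3/10) ≤ 1351/1000 := exp_third_lt
    _ ≤ ((15187:ℝ)/20736)⁻¹ := by norm_num

lemma key01 {z : ℝ} (h0 : 0 ≤ z) (h1 : z ≤ 1) :
    (1 - Real.exp (-z))/2 * tf2 z + Real.exp (-z)/2 * tf1 z ≤ -1 := by
  rw [tf2_eval01 h0 h1, tf1_eval01 h0 h1]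
  have hpos : (0:ℝ) < Real.exp z := Real.exp_pos z
  have h2 : (1 - z/2) * Real.exp z ≤ 1 + z/2 + z^2/4 := by
    have hmul := mul_le_mul_of_nonneg_left (exp_le_cubic h0 h1)
      (show (0:ℝ) ≤ 1 - z/2 by linarith)
    nlinarith [sq_nonneg z, sq_nonneg (z - 1/2), sq_nonneg (z*(1-z))]
  have hkey : 1 - z/2 ≤ Real.exp (-z) * (1 + z/2 + z^2/4) := by
    rw [Real.exp_neg]
    rw [mul_comm, ← div_eq_mul_inv, le_div_iff₀ hpos]
    linarith
  nlinarith [hkey]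

lemma keyPos {z : ℝ} (h : 0 ≤ z) :
    (1 - Real.exp (-z))/2 * tf2 z + Real.exp (-z)/2 * tf1 z ≤ 1 := by
  have h1 := tf1_nonpos h
  have h2 := tf2_le_two h
  have hw : (0:ℝ) < Real.exp (-z) := Real.exp_pos _
  have hw1 : Real.exp (-z) ≤ 1 := Real.exp_le_one_iff.2 (by linarith)
  have a1 : (1 - Real.exp (-z))/2 * tf2 z ≤ (1 - Real.exp (-z))/2 * 2 :=
    mul_le_mul_of_nonneg_left h2 (by linarith)
  have a2 : Real.exp (-z)/2 * tf1 z ≤ 0 :=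
    mul_nonpos_of_nonneg_of_nonpos (by positivity) h1
  linarith

lemma tf_abs_bound : ∃ C : ℝ, ∀ x, |tf x| ≤ C := by
  obtain ⟨C, hC⟩ := (isCompact_Icc (a := (-4:ℝ)) (b := 57/16)).exists_bound_of_continuousOn
    (contDiff_tf.continuous.continuousOn)
  refine ⟨max C 0, fun x => ?_⟩
  by_cases hx : x ∈ Icc (-4:ℝ) (57/16)
  · exact le_trans (hC x hx) (le_max_left _ _)
  · rcases not_and_or.1 hx with h | h
    · rw [tf_eq_zero_of_le (by linarith [lt_of_not_ge h])]
      simp [le_max_iff]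
    · rw [tf_eq_zero_of_ge (by linarith [lt_of_not_ge h])]
      simp [le_max_iff]


end XiAux

/-- Lemma 5.1, (5.2): for `t > 100`, `ℙ(sup_{0 ≤ s ≤ t} Ξ(s) < 1) ≤ 2 e^{-t/50}`. -/
theorem xi_smallness_bound
    {Ω : Type*} [MeasurableSpace Ω] (μ : Measure Ω) [IsProbabilityMeasure μ]
    (Ξ : Ω → ℝ → ℝ)
    (hΞ : ModDev.SolvesMP μ (fun z => 1 - Real.exp (-z)) (fun z => Real.exp (-z) / 2) Ξ)
    (hΞ0 : ∀ᵐ ω ∂μ, Ξ ω 0 = 0 ∧ ∀ t, 0 ≤ t → 0 ≤ Ξ ω t) :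
    ∀ t : ℝ, 100 < t →
      (μ {ω | sSup (Ξ ω '' Set.Icc 0 t) < 1}).toReal ≤ 2 * Real.exp (-(t / 50)) := by
  classical
  obtain ⟨hmeas, hcont, ℱ, hadapt, hmart⟩ := hΞ
  -- the compensator integrand
  set F : Ω → ℝ → ℝ := fun ω u =>
    (1 - Real.exp (-Ξ ω u)) / 2 * XiAux.tf2 (Ξ ω u) +
      Real.exp (-Ξ ω u) / 2 * XiAux.tf1 (Ξ ω u) with hF
  -- the martingale
  have hMg : Martingale (fun (r : NNReal) ω =>
      XiAux.tf (Ξ ω (r:ℝ)) - ∫ u in (0:ℝ)..(r:ℝ), F ω u) ℱ μ := by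
    have := hmart XiAux.tf XiAux.contDiff_tf XiAux.hcs_tf (subset_univ _)
    simpa only [XiAux.deriv_tf, XiAux.deriv_tf1, hF] using this
  set Mg : NNReal → Ω → ℝ := fun r ω =>
    XiAux.tf (Ξ ω (r:ℝ)) - ∫ u in (0:ℝ)..(r:ℝ), F ω u with hMgdef
  -- a.e. good set
  have hgood : ∀ᵐ ω ∂μ, Continuous (Ξ ω) ∧ Ξ ω 0 = 0 ∧ ∀ s, 0 ≤ s → 0 ≤ Ξ ω s := by
    filter_upwards [hcont, hΞ0] with ω h1 h2
    exact ⟨h1, h2.1, h2.2⟩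
  -- integrability of tf ∘ Ξ
  obtain ⟨C, hC⟩ := XiAux.tf_abs_bound
  have hint_tf : ∀ r : ℝ, Integrable (fun ω => XiAux.tf (Ξ ω r)) μ := by
    intro r
    refine (integrable_const C).mono'
      ((XiAux.contDiff_tf.continuous.measurable.comp (hmeas r)).aestronglyMeasurable)
      (ae_of_all _ fun ω => ?_)
    simpa [Real.norm_eq_abs] using hC (Ξ ω r)
  -- the times
  set τ : ℕ → NNReal := fun k => ((13 * k : ℕ) : NNReal) with hτ
  have hτcoe : ∀ k : ℕ, ((τ k : NNReal) : ℝ) = 13 * k := by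
    intro k; simp [hτ]
  have hτmono : ∀ k : ℕ, τ k ≤ τ (k+1) := by
    intro k; simp only [hτ]; exact Nat.cast_le.2 (by omega)
  -- the events
  set G : ℕ → Set Ω := fun k =>
    {ω | ∀ q : ℚ, 0 ≤ (q:ℝ) → (q:ℝ) ≤ 13 * k → Ξ ω (q:ℝ) < 1} with hG
  have hGF : ∀ k, MeasurableSet[ℱ (τ k)] (G k) := by
    intro k
    have hrw : G k = ⋂ (q : ℚ), ⋂ (_ : 0 ≤ (q:ℝ) ∧ (q:ℝ) ≤ 13 * k),
        {ω | Ξ ω (q:ℝ) < 1} := by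
      ext ω
      simp only [hG, mem_setOf_eq, mem_iInter, and_imp]
    rw [hrw]
    refine MeasurableSet.iInter fun q => MeasurableSet.iInter fun hq => ?_
    have hsm : StronglyMeasurable[ℱ ((q:ℝ).toNNReal)] (fun ω => Ξ ω (q:ℝ)) := by
      have h := hadapt ((q:ℝ).toNNReal)
      simp only [Real.coe_toNNReal _ hq.1] at h
      exact h.stronglyMeasurable
    have hle : (q:ℝ).toNNReal ≤ τ k := by
      rw [Real.toNNReal_le_iff_le_coe, hτcoe]
      exact hq.2
    exact ℱ.mono hle _ (hsm.measurable measurableSet_Iio)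
  have hGm : ∀ k, MeasurableSet (G k) := fun k => ℱ.le _ _ (hGF k)
  have hGmono : ∀ k, G (k+1) ⊆ G k := by
    intro k ω hω q h0 h13
    refine hω q h0 (le_trans h13 ?_)
    have : (0:ℝ) ≤ (k:ℝ) := Nat.cast_nonneg k
    push_cast
    linarith
  -- path bound from rational data
  have pathle : ∀ (ω : Ω), Continuous (Ξ ω) → Ξ ω 0 = 0 → ∀ (T : ℝ),
      (∀ q : ℚ, 0 ≤ (q:ℝ) → (q:ℝ) ≤ T → Ξ ω (q:ℝ) < 1) →
      ∀ u, 0 ≤ u → u ≤ T → Ξ ω u ≤ 1 := by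
    intro ω hc h0 T hq u hu huT
    by_contra hgt
    push_neg at hgt
    rcases eq_or_lt_of_le hu with h | h
    · rw [← h, h0] at hgt; linarith
    · have hev : ∀ᶠ z in nhds u, 1 < Ξ ω z :=
        (hc.tendsto u).eventually (eventually_gt_nhds hgt)
      rw [Metric.eventually_nhds_iff] at hev
      obtain ⟨ε, hε, hball⟩ := hev
      obtain ⟨q, hq1, hq2⟩ := exists_rat_btwn (show max 0 (u - ε) < u by
        rw [max_lt_iff]; exact ⟨h, by linarith⟩)
      have hq0 : 0 ≤ (q:ℝ) := le_of_lt (lt_of_le_of_lt (le_max_left _ _) hq1)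
      have huε : u - ε < (q:ℝ) := lt_of_le_of_lt (le_max_right _ _) hq1
      have hlt := hq q hq0 (le_trans hq2.le huT)
      have hdist : dist (q:ℝ) u < ε := by
        rw [Real.dist_eq, abs_of_nonpos (by linarith)]
        linarith
      have := hball hdist
      linarith
  -- the one-step contraction
  have step : ∀ k : ℕ,
      (μ (G (k+1))).toReal ≤ 15187/20736 * (μ (G k)).toReal := by
    intro k
    set sk : ℝ := ((τ k : NNReal) : ℝ) with hsk
    set sk1 : ℝ := ((τ (k+1) : NNReal) : ℝ) with hsk1
    have hsk0 : 0 ≤ sk := NNReal.coe_nonneg _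
    have hskle : sk ≤ sk1 := by
      rw [hsk, hsk1, hτcoe, hτcoe]; push_cast; linarith [Nat.cast_nonneg (α := ℝ) k]
    have hsksub : sk1 - sk = 13 := by
      rw [hsk, hsk1, hτcoe, hτcoe]; push_cast; ring
    -- the increment of the compensator
    set J : Ω → ℝ := fun ω => (XiAux.tf (Ξ ω sk1) - Mg (τ (k+1)) ω) -
      (XiAux.tf (Ξ ω sk) - Mg (τ k) ω) with hJ
    have hJint : Integrable J μ :=
      ((hint_tf sk1).sub (hMg.integrable _)).sub ((hint_tf sk).sub (hMg.integrable _))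
    -- pathwise properties of J
    have hJprop : ∀ᵐ ω ∂μ, J ω ≤ 13 ∧ (ω ∈ G (k+1) → J ω ≤ -13) := by
      filter_upwards [hgood] with ω hω
      obtain ⟨hXc, hX0, hXpos⟩ := hω
      have hFc : Continuous (F ω) := by
        refine Continuous.add ?_ ?_
        · exact ((continuous_const.sub (Real.continuous_exp.comp hXc.neg)).div_const 2).mul
            (XiAux.continuous_tf2.comp hXc)
        · exact ((Real.continuous_exp.comp hXc.neg).div_const 2).mul
            (XiAux.continuous_tf1.comp hXc)
      have hJval : J ω = ∫ u in sk..sk1, F ω u := by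
        have h1 : IntervalIntegrable (F ω) MeasureTheory.volume 0 sk :=
          hFc.intervalIntegrable _ _
        have h2 : IntervalIntegrable (F ω) MeasureTheory.volume sk sk1 :=
          hFc.intervalIntegrable _ _
        have hadd := intervalIntegral.integral_add_adjacent_intervals h1 h2
        simp only [hJ, hMgdef]
        rw [← hadd]
        ring
      have hFle1 : ∀ u ∈ Icc sk sk1, F ω u ≤ 1 := by
        intro u hu
        exact XiAux.keyPos (hXpos u (le_trans hsk0 hu.1))
      constructor
      · rw [hJval]
        have := intervalIntegral.integral_mono_on (μ := MeasureTheory.volume) hskle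
          (hFc.intervalIntegrable _ _) intervalIntegrable_const hFle1
        rw [intervalIntegral.integral_const, hsksub] at this
        simpa using this
      · intro hmem
        rw [hJval]
        have hpath : ∀ u ∈ Icc sk sk1, F ω u ≤ -1 := by
          intro u hu
          have hu0 : 0 ≤ u := le_trans hsk0 hu.1
          have hub : Ξ ω u ≤ 1 := by
            refine pathle ω hXc hX0 (13 * ((k:ℝ)+1)) ?_ u hu0 ?_
            · intro q hq0 hq13
              exact hmem q hq0 (by push_cast; linarith)
            · have : sk1 = 13 * ((k:ℝ)+1) := by rw [hsk1, hτcoe]; push_cast; ring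
              linarith [hu.2, this]
          exact XiAux.key01 (hXpos u hu0) hub
        have := intervalIntegral.integral_mono_on (μ := MeasureTheory.volume) hskle
          (hFc.intervalIntegrable _ _) intervalIntegrable_const hpath
        rw [intervalIntegral.integral_const, hsksub] at this
        simpa using this
    -- martingale set-integral identity on G k
    have hSI : ∫ ω in G k, Mg (τ k) ω ∂μ = ∫ ω in G k, Mg (τ (k+1)) ω ∂μ :=
      hMg.setIntegral_eq (hτmono k) (hGF k)
    -- the integral of J over G k
    have heq1 : ∫ ω in G k, J ω ∂μ =
        (∫ ω in G k, XiAux.tf (Ξ ω sk1) ∂μ) - ∫ ω in G k, XiAux.tf (Ξ ω sk) ∂μ := by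
      have e1 : ∫ ω in G k, J ω ∂μ =
          (∫ ω in G k, (XiAux.tf (Ξ ω sk1) - Mg (τ (k+1)) ω) ∂μ) -
            ∫ ω in G k, (XiAux.tf (Ξ ω sk) - Mg (τ k) ω) ∂μ :=
        integral_sub ((hint_tf sk1).sub (hMg.integrable _)).integrableOn
          ((hint_tf sk).sub (hMg.integrable _)).integrableOn
      rw [e1, integral_sub (hint_tf sk1).integrableOn (hMg.integrable _).integrableOn,
        integral_sub (hint_tf sk).integrableOn (hMg.integrable _).integrableOn, ← hSI]
      ring
    -- splitting over G (k+1)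
    have hsplit : ∫ ω in G k, J ω ∂μ =
        (∫ ω in G (k+1), J ω ∂μ) + ∫ ω in (G k \ G (k+1)), J ω ∂μ := by
      have hu : G k = G (k+1) ∪ (G k \ G (k+1)) := (union_diff_cancel (hGmono k)).symm
      conv_lhs => rw [hu]
      exact setIntegral_union disjoint_sdiff_self_right ((hGm k).diff (hGm (k+1)))
        hJint.integrableOn hJint.integrableOn
    -- bounds
    have b5 : ∫ ω in G (k+1), J ω ∂μ ≤ (-13) * (μ (G (k+1))).toReal := by
      have h := setIntegral_mono_on_ae hJint.integrableOn
        (integrableOn_const (C := (-13:ℝ)) (measure_ne_top _ _)) (hGm (k+1))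
        (by filter_upwards [hJprop] with ω hp hmem; exact hp.2 hmem)
      rw [setIntegral_const] at h
      simpa [smul_eq_mul, mul_comm, measureReal_def] using h
    have b6 : ∫ ω in (G k \ G (k+1)), J ω ∂μ ≤
        13 * ((μ (G k)).toReal - (μ (G (k+1))).toReal) := by
      have h := setIntegral_mono_on_ae hJint.integrableOn
        (integrableOn_const (C := (13:ℝ)) (measure_ne_top _ _)) ((hGm k).diff (hGm (k+1)))
        (by filter_upwards [hJprop] with ω hp _; exact hp.1)
      rw [setIntegral_const] at h
      have hmd : (μ (G k \ G (k+1))).toReal = (μ (G k)).toReal - (μ (G (k+1))).toReal := by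
        rw [measure_diff (hGmono k) (hGm (k+1)).nullMeasurableSet (measure_ne_top μ _),
          ENNReal.toReal_sub_of_le (measure_mono (hGmono k)) (measure_ne_top μ _)]
      rw [measureReal_def, hmd] at h
      simpa [smul_eq_mul, mul_comm, measureReal_def] using h
    have b1 : (μ (G (k+1))).toReal ≤ ∫ ω in G (k+1), XiAux.tf (Ξ ω sk1) ∂μ := by
      have h := setIntegral_mono_on_ae (f := fun _ => (1:ℝ))
        (integrableOn_const (measure_ne_top μ (G (k+1))))
        (hint_tf sk1).integrableOn (hGm (k+1)) ?_
      · rw [setIntegral_const] at h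
        simpa [smul_eq_mul, measureReal_def] using h
      · filter_upwards [hgood] with ω hω hmem
        obtain ⟨hXc, hX0, hXpos⟩ := hω
        have hub : Ξ ω sk1 ≤ 1 := by
          refine pathle ω hXc hX0 (13 * ((k:ℝ)+1)) ?_ sk1 (NNReal.coe_nonneg _) ?_
          · intro q hq0 hq13
            exact hmem q hq0 (by push_cast; linarith)
          · rw [hsk1, hτcoe]; push_cast; ring_nf; rfl
        exact XiAux.tf_ge_one (hXpos sk1 (NNReal.coe_nonneg _)) hub
    have b2 : ∫ ω in G (k+1), XiAux.tf (Ξ ω sk1) ∂μ ≤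
        ∫ ω in G k, XiAux.tf (Ξ ω sk1) ∂μ := by
      refine setIntegral_mono_set (hint_tf sk1).integrableOn ?_
        (HasSubset.Subset.eventuallyLE (hGmono k))
      refine ae_restrict_of_ae ?_
      filter_upwards [hgood] with ω hω
      exact XiAux.tf_nonneg (hω.2.2 sk1 (NNReal.coe_nonneg _))
    have b3 : ∫ ω in G k, XiAux.tf (Ξ ω sk) ∂μ ≤ 5203/768 * (μ (G k)).toReal := by
      have h := setIntegral_mono_on_ae (hint_tf sk).integrableOn
        (integrableOn_const (C := (5203/768:ℝ)) (measure_ne_top _ _)) (hGm k)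
        (by filter_upwards [hgood] with ω hω _; exact XiAux.tf_le_max (hω.2.2 sk hsk0))
      rw [setIntegral_const] at h
      simpa [smul_eq_mul, mul_comm, measureReal_def] using h
    -- combine
    have hfin : (μ (G (k+1))).toReal ≤ 5203/768 * (μ (G k)).toReal
        + (-13) * (μ (G (k+1))).toReal + 13 * ((μ (G k)).toReal - (μ (G (k+1))).toReal) := by
      calc (μ (G (k+1))).toReal ≤ ∫ ω in G (k+1), XiAux.tf (Ξ ω sk1) ∂μ := b1
        _ ≤ ∫ ω in G k, XiAux.tf (Ξ ω sk1) ∂μ := b2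
        _ = (∫ ω in G k, XiAux.tf (Ξ ω sk) ∂μ) + ∫ ω in G k, J ω ∂μ := by
            rw [heq1]; ring
        _ ≤ _ := by
            rw [hsplit]
            have := b3; have := b5; have := b6
            linarith
    linarith
  -- iterate
  have hiter : ∀ n : ℕ, (μ (G n)).toReal ≤ (15187/20736 : ℝ) ^ n := by
    intro n
    induction n with
    | zero =>
      simp only [pow_zero]
      exact ENNReal.toReal_le_of_le_ofReal (by norm_num) (by simpa using prob_le_one)
    | succ n ih =>
      refine (step n).trans ?_
      rw [pow_succ]
      calc (15187/20736 : ℝ) * (μ (G n)).toReal ≤ 15187/20736 * (15187/20736)^n := by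
            exact mul_le_mul_of_nonneg_left ih (by norm_num)
        _ = (15187/20736)^n * (15187/20736) := by ring
  -- conclude
  intro t ht
  set n : ℕ := ⌊t / 13⌋₊ with hn
  have hAG : μ {ω | sSup (Ξ ω '' Set.Icc 0 t) < 1} ≤ μ (G n) := by
    apply measure_mono_ae
    filter_upwards [hgood] with ω hω hmem
    obtain ⟨hXc, hX0, hXpos⟩ := hω
    intro q hq0 hq13
    have h13n : 13 * (n:ℝ) ≤ t := by
      have := Nat.floor_le (show (0:ℝ) ≤ t/13 by linarith)
      rw [← hn] at this
      linarith
    have hqt : (q:ℝ) ≤ t := le_trans hq13 h13n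
    have hmemim : Ξ ω (q:ℝ) ∈ Ξ ω '' Set.Icc 0 t := ⟨(q:ℝ), ⟨hq0, hqt⟩, rfl⟩
    have hbdd : BddAbove (Ξ ω '' Set.Icc 0 t) :=
      (isCompact_Icc.image_of_continuousOn hXc.continuousOn).bddAbove
    exact lt_of_le_of_lt (le_csSup hbdd hmemim) hmem
  have h1 : (μ {ω | sSup (Ξ ω '' Set.Icc 0 t) < 1}).toReal ≤ (μ (G n)).toReal :=
    ENNReal.toReal_mono (measure_ne_top μ _) hAG
  have h2 : (μ (G n)).toReal ≤ (Real.exp (-(3/10)))^n :=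
    (hiter n).trans (pow_le_pow_left₀ (by norm_num) XiAux.rho_le n)
  have h3 : (Real.exp (-(3/10)))^n = Real.exp ((n:ℝ) * (-(3/10))) :=
    (Real.exp_nat_mul _ n).symm
  have h4 : (n:ℝ) * (-(3/10)) ≤ -(t/50) := by
    have hfl : t/13 < (n:ℝ) + 1 := by
      rw [hn]; exact_mod_cast Nat.lt_floor_add_one (t/13)
    nlinarith
  calc (μ {ω | sSup (Ξ ω '' Set.Icc 0 t) < 1}).toReal
      ≤ (Real.exp (-(3/10)))^n := h1.trans h2
    _ = Real.exp ((n:ℝ) * (-(3/10))) := h3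
    _ ≤ Real.exp (-(t/50)) := Real.exp_le_exp.2 h4
    _ ≤ 2 * Real.exp (-(t/50)) := by nlinarith [Real.exp_pos (-(t/50))]
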